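/- Let a, b > 0 with a ≠ b and γ ∈ ℝ, and set f(k,y) = −ak − by + γ. Suppose (k, y, ū) ∈ ℝ³ satisfies the stationary system λū = δk, f(k,y) = 0, and (r+δ)ū = hp/(k+y+ε) − c̄, with k + y + ε ≠ 0. Then k solves the quadratic equation δk² + ( δ·(γ/b + ε)/(1 − a/b) + c̄λ/(r+δ) )·k + (λ/((r+δ)(1 − a/b)))·( c̄(γ/b + ε) − hp ) = 0. -/
import Mathlib

/-- With a linear reserve drift `f(k,y) = -ak - by + γ` (`a ≠ b`), any stationary state
`(k, y, ū)` of the model with adapting reserve satisfies the quadratic equation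
`δk² + (δ(γ/b + ε)/(1 - a/b) + c̄λ/(r+δ))k + (λ/((r+δ)(1 - a/b)))(c̄(γ/b + ε) - hp) = 0`. -/
theorem stationary_state_linear_reserve_quadratic
    (r δ lam h p ε cbar : ℝ)
    (hr : 0 < r) (hδ : 0 < δ) (hlam : 0 < lam) (hh : 0 < h) (hp : 0 < p) (hε : 0 < ε)
    (a b γ : ℝ) (ha : 0 < a) (hb : 0 < b) (hab : a ≠ b)
    (k y ubar : ℝ)
    (h1 : lam * ubar = δ * k)
    (h2 : -a * k - b * y + γ = 0)
    (h3 : (r + δ) * ubar = h * p / (k + y + ε) - cbar)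
    (hne : k + y + ε ≠ 0) :
    δ * k ^ 2
      + (δ * (γ / b + ε) / (1 - a / b) + cbar * lam / (r + δ)) * k
      + (lam / ((r + δ) * (1 - a / b))) * (cbar * (γ / b + ε) - h * p) = 0 := by
  have hb0 : b ≠ 0 := hb.ne'
  have hrδ : r + δ ≠ 0 := by positivity
  have hba : b - a ≠ 0 := sub_ne_zero.mpr (Ne.symm hab)
  have hB : 1 - a / b ≠ 0 := by
    rw [sub_ne_zero]; intro hh'
    exact hab (by field_simp at hh'; exact hh'.symm)
  have h3' : (r + δ) * ubar * (k + y + ε) = h * p - cbar * (k + y + ε) := by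
    field_simp at h3
    linarith [h3]
  have key : δ * k * (r + δ) * (k + y + ε) + cbar * lam * (k + y + ε) - lam * h * p = 0 := by
    linear_combination lam * h3' - (r + δ) * (k + y + ε) * h1
  have hS : k + y + ε = (1 - a / b) * k + (γ / b + ε) := by
    field_simp
    linear_combination -h2
  have e : (δ * k ^ 2
      + (δ * (γ / b + ε) / (1 - a / b) + cbar * lam / (r + δ)) * k
      + (lam / ((r + δ) * (1 - a / b))) * (cbar * (γ / b + ε) - h * p))
      * ((r + δ) * (1 - a / b))
      = δ * k * (r + δ) * (k + y + ε) + cbar * lam * (k + y + ε) - lam * h * p := by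
    rw [hS]
    field_simp
    ring
  have hC : (r + δ) * (1 - a / b) ≠ 0 := mul_ne_zero hrδ hB
  exact (mul_eq_zero.mp (e.trans key)).resolve_right hC
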